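/- Let ξ be a real irrational number and let α, β be real numbers with 0 < α < 1 and β > 1. Assume there exist integer sequences (u_n)_{n≥1} and (v_n)_{n≥1} with u_n ξ − v_n ≠ 0 and u_n > 0 for all n, such that limsup_{n→∞} |u_{n+1} ξ − v_{n+1}| / |u_n ξ − v_n| ≤ α and limsup_{n→∞} u_{n+1}/u_n ≤ β. Then μ(ξ) ≤ 1 − (log β)/(log α). -/

import Mathlib

open Filter Topology

/-- The irrationality exponent of a real number, as an extended real:
the infimum of all real `μ` such that `|ξ - p/q| > 1/q^μ` for all integers `p, q`
with `q` sufficiently large (`⊤` if no such real `μ` exists). -/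
noncomputable def irrationalityExponent (ξ : ℝ) : EReal :=
  sInf {x : EReal | ∃ μ : ℝ, x = (μ : EReal) ∧
    ∀ᶠ q : ℕ in atTop, ∀ p : ℤ, |ξ - (p : ℝ) / (q : ℝ)| > 1 / (q : ℝ) ^ μ}

private lemma key_lemma (ξ : ℝ) (hξ : Irrational ξ) (α' β' : ℝ)
    (hα0 : 0 < α') (hα1 : α' < 1) (hβ : 1 < β')
    (u v : ℕ → ℤ)
    (hne : ∀ n, (u n : ℝ) * ξ - (v n : ℝ) ≠ 0) (hpos : ∀ n, 0 < u n)
    (N : ℕ)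
    (hr : ∀ n, N ≤ n → |(u (n+1) : ℝ) * ξ - (v (n+1) : ℝ)| ≤ α' * |(u n : ℝ) * ξ - (v n : ℝ)|)
    (hu : ∀ n, N ≤ n → ((u (n+1) : ℝ)) ≤ β' * (u n : ℝ))
    (μ' : ℝ) (hμ : 1 + Real.log β' / (-Real.log α') < μ') :
    ∀ᶠ q : ℕ in atTop, ∀ p : ℤ, |ξ - (p : ℝ) / (q : ℝ)| > 1 / (q : ℝ) ^ μ' := by
  classical
  set r : ℕ → ℝ := fun n => |(u n : ℝ) * ξ - (v n : ℝ)| with hrdef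
  have hrpos : ∀ n, 0 < r n := fun n => abs_pos.mpr (hne n)
  have hu1 : ∀ n, (1:ℝ) ≤ (u n : ℝ) := by
    intro n; exact_mod_cast hpos n
  have hlogα : Real.log α' < 0 := Real.log_neg hα0 hα1
  set L : ℝ := -Real.log α' with hLdef
  have hL : 0 < L := by simp only [hLdef]; linarith
  set e : ℝ := Real.log β' / L with hedef
  have hβ0 : (0:ℝ) < β' := lt_trans one_pos hβ
  have hlogβ : 0 < Real.log β' := Real.log_pos hβ
  have hepos : 0 ≤ e := le_of_lt (div_pos hlogβ hL)
  -- geometric bounds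
  have hgeo_r : ∀ k, r (N + k) ≤ α' ^ k * r N := by
    intro k
    induction k with
    | zero => simp
    | succ k ih =>
      have h1 := hr (N + k) (Nat.le_add_right _ _)
      have : r (N + (k+1)) ≤ α' * r (N + k) := by
        show |(u (N+k+1) : ℝ) * ξ - (v (N+k+1) : ℝ)| ≤ _
        convert h1 using 3 <;> ring_nf
      calc r (N + (k+1)) ≤ α' * r (N + k) := this
        _ ≤ α' * (α' ^ k * r N) := by
            exact mul_le_mul_of_nonneg_left ih hα0.le
        _ = α' ^ (k+1) * r N := by ring
  have hgeo_u : ∀ k, (u (N + k) : ℝ) ≤ β' ^ k * (u N : ℝ) := by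
    intro k
    induction k with
    | zero => simp
    | succ k ih =>
      have h1 := hu (N + k) (Nat.le_add_right _ _)
      calc (u (N + (k+1)) : ℝ) = (u (N + k + 1) : ℝ) := by ring_nf
        _ ≤ β' * (u (N + k) : ℝ) := h1
        _ ≤ β' * (β' ^ k * (u N : ℝ)) := mul_le_mul_of_nonneg_left ih hβ0.le
        _ = β' ^ (k+1) * (u N : ℝ) := by ring
  have hmono : ∀ m n, N ≤ m → m ≤ n → r n ≤ r m := by
    intro m n hNm hmn
    induction n, hmn using Nat.le_induction with
    | base => exact le_refl _
    | succ n hn ih =>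
      have h1 := hr n (le_trans hNm hn)
      have : r (n+1) ≤ α' * r n := h1
      calc r (n+1) ≤ α' * r n := this
        _ ≤ 1 * r n := mul_le_mul_of_nonneg_right hα1.le (hrpos n).le
        _ = r n := one_mul _
        _ ≤ r m := ih
  set C : ℝ := 2 * β' * β' * (u N : ℝ) * (2 * r N) ^ e with hCdef
  have hC0 : 0 < C := by
    apply mul_pos
    apply mul_pos
    apply mul_pos
    apply mul_pos
    · norm_num
    · exact hβ0
    · exact hβ0
    · exact lt_of_lt_of_le one_pos (hu1 N)
    · exact Real.rpow_pos_of_pos (by have := hrpos N; linarith) e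
  -- the per-q statement
  have hmain : ∀ q : ℕ, 1 ≤ q → 1 / (2 * (q:ℝ)) < r N →
      C * (q:ℝ) ^ (1 + e) ≤ (q:ℝ) ^ μ' →
      ∀ p : ℤ, |ξ - (p : ℝ) / (q : ℝ)| > 1 / (q : ℝ) ^ μ' := by
    intro q hq1 hq2 hq3 p
    have hQ0 : (0:ℝ) < (q:ℝ) := by exact_mod_cast hq1
    set Q : ℝ := (q : ℝ) with hQdef
    have hQne : Q ≠ 0 := ne_of_gt hQ0
    -- minimal k with r (N+k) < 1/(2Q)
    have hex1 : ∃ k, r (N + k) < 1 / (2 * Q) := by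
      have h1 : Filter.Tendsto (fun k => α' ^ k * r N) atTop (𝓝 (0 * r N)) :=
        (tendsto_pow_atTop_nhds_zero_of_lt_one hα0.le hα1).mul_const (r N)
      rw [zero_mul] at h1
      have h2 : ∀ᶠ k in atTop, α' ^ k * r N < 1 / (2 * Q) :=
        h1.eventually_lt_const (by positivity)
      obtain ⟨k, hk⟩ := h2.exists
      exact ⟨k, lt_of_le_of_lt (hgeo_r k) hk⟩
    set k₀ : ℕ := Nat.find hex1 with hk₀def
    have hk₀ : r (N + k₀) < 1 / (2 * Q) := Nat.find_spec hex1
    have hk₀ne : k₀ ≠ 0 := by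
      intro h
      rw [h] at hk₀
      simp only [Nat.add_zero] at hk₀
      linarith
    have hk₀pos : 1 ≤ k₀ := Nat.one_le_iff_ne_zero.mpr hk₀ne
    have hkmin : ¬ r (N + (k₀ - 1)) < 1 / (2 * Q) :=
      Nat.find_min hex1 (Nat.sub_lt (Nat.lt_of_lt_of_le Nat.zero_lt_one hk₀pos) Nat.one_pos)
    have hkmin' : 1 / (2 * Q) ≤ r (N + (k₀ - 1)) := not_lt.mp hkmin
    set n : ℕ := N + k₀ with hndef
    have hNn : N ≤ n := Nat.le_add_right _ _
    -- ξ - p/Q ≠ 0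
    have hdiff : 0 < |ξ - (p:ℝ)/Q| := by
      rw [abs_pos, sub_ne_zero]
      intro h
      apply hξ.ne_rat ((p : ℚ) / (q : ℚ))
      rw [h]; push_cast; ring
    -- linear form equality in the degenerate case
    have hlin : ∀ k : ℕ, u k * p = v k * (q:ℤ) → r k = (u k : ℝ) * |ξ - (p:ℝ)/Q| := by
      intro k hk
      have hv : (v k : ℝ) * Q = (u k : ℝ) * (p:ℝ) := by
        have : ((v k * q : ℤ) : ℝ) = ((u k * p : ℤ) : ℝ) := by rw [← hk]
        push_cast at this
        linarith
      have : (u k : ℝ) * ξ - (v k : ℝ) = (u k : ℝ) * (ξ - (p:ℝ)/Q) := by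
        field_simp
        linarith
      rw [hrdef]
      show |(u k : ℝ) * ξ - (v k : ℝ)| = _
      rw [this, abs_mul, abs_of_pos (lt_of_lt_of_le one_pos (hu1 k))]
    have hstep : ∀ k, N ≤ k → u k * p = v k * (q:ℤ) → u (k+1) * p = v (k+1) * (q:ℤ) →
        (u (k+1) : ℝ) ≤ α' * (u k : ℝ) := by
      intro k hNk h1 h2
      have h3 := hr k hNk
      have h4 : r (k+1) ≤ α' * r k := h3
      rw [hlin k h1, hlin (k+1) h2] at h4
      rw [← mul_assoc] at h4
      exact le_of_mul_le_mul_right h4 hdiff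
    -- existence of a nondegenerate index
    have hex2 : ∃ j, u (n + j) * p ≠ v (n + j) * (q:ℤ) := by
      by_contra hcon
      push_neg at hcon
      have hdec : ∀ j, (u (n + j) : ℝ) ≤ α' ^ j * (u n : ℝ) := by
        intro j
        induction j with
        | zero => simp
        | succ j ih =>
          have h1 := hstep (n + j) (le_trans hNn (Nat.le_add_right _ _)) (hcon j)
            (by have := hcon (j+1); convert this using 2 <;> ring_nf)
          calc (u (n + (j+1)) : ℝ) = (u (n + j + 1) : ℝ) := by ring_nf
            _ ≤ α' * (u (n + j) : ℝ) := h1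
            _ ≤ α' * (α' ^ j * (u n : ℝ)) := mul_le_mul_of_nonneg_left ih hα0.le
            _ = α' ^ (j+1) * (u n : ℝ) := by ring
      have h1 : Filter.Tendsto (fun j => α' ^ j * (u n : ℝ)) atTop (𝓝 (0 * (u n : ℝ))) :=
        (tendsto_pow_atTop_nhds_zero_of_lt_one hα0.le hα1).mul_const _
      rw [zero_mul] at h1
      obtain ⟨j, hj⟩ := (h1.eventually_lt_const one_pos).exists
      exact absurd (le_trans (hu1 (n + j)) (hdec j)) (not_le.mpr hj)
    set j₀ : ℕ := Nat.find hex2 with hj₀def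
    set m : ℕ := n + j₀ with hmdef
    have hm : u m * p ≠ v m * (q:ℤ) := Nat.find_spec hex2
    have hNm : N ≤ m := le_trans hNn (Nat.le_add_right _ _)
    -- chain bound: u (n+i) ≤ u n for i < j₀
    have hchain : ∀ i, i < j₀ → (u (n + i) : ℝ) ≤ (u n : ℝ) := by
      intro i hi
      induction i with
      | zero => simp
      | succ i ih =>
        have hi' : i < j₀ := Nat.lt_of_succ_lt hi
        have he1 : u (n + i) * p = v (n + i) * (q:ℤ) := not_not.mp (Nat.find_min hex2 hi')
        have he2 : u (n + i + 1) * p = v (n + i + 1) * (q:ℤ) := by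
          have := not_not.mp (Nat.find_min hex2 hi)
          convert this using 2 <;> ring_nf
        have h1 := hstep (n + i) (le_trans hNn (Nat.le_add_right _ _)) he1 he2
        calc (u (n + (i+1)) : ℝ) = (u (n + i + 1) : ℝ) := by ring_nf
          _ ≤ α' * (u (n + i) : ℝ) := h1
          _ ≤ 1 * (u n : ℝ) := by
              apply mul_le_mul hα1.le (ih hi') (by linarith [hu1 (n+i)]) zero_le_one
          _ = (u n : ℝ) := one_mul _
    have hum : (u m : ℝ) ≤ β' * (u n : ℝ) := by
      rcases Nat.eq_zero_or_pos j₀ with h0 | h0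
      · have : m = n := by omega
        rw [this]
        nlinarith [hu1 n]
      · have h1 : m = n + (j₀ - 1) + 1 := by omega
        have h2 := hu (n + (j₀ - 1)) (le_trans hNn (Nat.le_add_right _ _))
        have h3 : (u (n + (j₀ - 1)) : ℝ) ≤ (u n : ℝ) := hchain _ (by omega)
        rw [h1]
        calc (u (n + (j₀-1) + 1) : ℝ) ≤ β' * (u (n + (j₀-1)) : ℝ) := h2
          _ ≤ β' * (u n : ℝ) := mul_le_mul_of_nonneg_left h3 hβ0.le
    have hrm : r m ≤ r n := hmono n m hNn (Nat.le_add_right _ _)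
    -- main lower bound: |ξ - p/Q| > 1/(2*Q*u m)
    have h1le : (1:ℝ) ≤ |((u m * p - v m * (q:ℤ) : ℤ) : ℝ)| := by
      rw [← Int.cast_abs]
      exact_mod_cast Int.one_le_abs (sub_ne_zero.mpr hm)
    have hiden : ((u m * p - v m * (q:ℤ) : ℤ) : ℝ)
        = (u m : ℝ) * ((p:ℝ) - Q * ξ) + Q * ((u m : ℝ) * ξ - (v m : ℝ)) := by
      push_cast; ring
    have h2 : |((u m * p - v m * (q:ℤ) : ℤ) : ℝ)|
        ≤ (u m : ℝ) * |(p:ℝ) - Q * ξ| + Q * r m := by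
      rw [hiden]
      calc |(u m : ℝ) * ((p:ℝ) - Q * ξ) + Q * ((u m : ℝ) * ξ - (v m : ℝ))|
          ≤ |(u m : ℝ) * ((p:ℝ) - Q * ξ)| + |Q * ((u m : ℝ) * ξ - (v m : ℝ))| := abs_add_le _ _
        _ = (u m : ℝ) * |(p:ℝ) - Q * ξ| + Q * r m := by
            rw [abs_mul, abs_mul, abs_of_pos (lt_of_lt_of_le one_pos (hu1 m)),
              abs_of_pos hQ0]
    have h3 : Q * r m < 1/2 := by
      have := lt_of_le_of_lt hrm hk₀
      calc Q * r m ≤ Q * r n := mul_le_mul_of_nonneg_left hrm hQ0.le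
        _ < Q * (1 / (2 * Q)) := mul_lt_mul_of_pos_left hk₀ hQ0
        _ = 1/2 := by field_simp
    have h4 : 1/2 < (u m : ℝ) * |(p:ℝ) - Q * ξ| := by linarith
    have h5 : |(p:ℝ) - Q * ξ| = Q * |ξ - (p:ℝ)/Q| := by
      have he1 : (p:ℝ) - Q * ξ = -(Q * (ξ - (p:ℝ)/Q)) := by
        field_simp
        ring
      rw [he1, abs_neg, abs_mul, abs_of_pos hQ0]
    have h6 : 1/2 < (u m : ℝ) * Q * |ξ - (p:ℝ)/Q| := by
      rw [h5] at h4; linarith [h4]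
    have hum0 : (0:ℝ) < (u m : ℝ) := lt_of_lt_of_le one_pos (hu1 m)
    have h7 : 1 / (2 * Q * (u m : ℝ)) < |ξ - (p:ℝ)/Q| := by
      rw [div_lt_iff₀ (by positivity)]
      have hre : |ξ - (p:ℝ)/Q| * (2 * Q * (u m : ℝ)) = 2 * ((u m : ℝ) * Q * |ξ - (p:ℝ)/Q|) := by
        ring
      rw [hre]
      linarith
    -- bound u n via k₀
    have hkb : ((k₀ : ℝ) - 1) * L ≤ Real.log (2 * Q * r N) := by
      have h8 : 1 / (2 * Q) ≤ α' ^ (k₀ - 1) * r N := le_trans hkmin' (hgeo_r (k₀ - 1))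
      have h9 : 1 ≤ 2 * Q * r N * α' ^ (k₀ - 1) := by
        rw [div_le_iff₀ (by positivity)] at h8
        have hre : α' ^ (k₀ - 1) * r N * (2 * Q) = 2 * Q * r N * α' ^ (k₀ - 1) := by ring
        linarith
      have h10 : (1:ℝ) / α' ^ (k₀ - 1) ≤ 2 * Q * r N := by
        rw [div_le_iff₀ (pow_pos hα0 _)]
        linarith
      have h11 := Real.log_le_log (by positivity) h10
      rw [Real.log_div one_ne_zero (ne_of_gt (pow_pos hα0 _)), Real.log_one,
        Real.log_pow] at h11
      have h12 : ((k₀ - 1 : ℕ) : ℝ) * L ≤ Real.log (2 * Q * r N) := by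
        rw [hLdef]
        push_cast at h11 ⊢
        linarith
      have h13 : ((k₀ - 1 : ℕ) : ℝ) = (k₀ : ℝ) - 1 := by
        have : 1 ≤ k₀ := hk₀pos
        push_cast [Nat.cast_sub this]
        ring
      rwa [h13] at h12
    have hQR1 : (1:ℝ) ≤ 2 * Q * r N := by
      rw [div_lt_iff₀ (by positivity)] at hq2
      have hre : r N * (2 * Q) = 2 * Q * r N := by ring
      linarith
    have hpowb : β' ^ (k₀ - 1) ≤ (2 * Q * r N) ^ e := by
      have hc : ((k₀:ℝ) - 1) = ((k₀ - 1 : ℕ) : ℝ) := by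
        have h := hk₀pos
        push_cast [Nat.cast_sub h]
        ring
      have h14 : β' ^ (k₀ - 1) = Real.exp (((k₀:ℝ) - 1) * Real.log β') := by
        rw [hc, ← Real.log_pow, Real.exp_log (pow_pos hβ0 _)]
      have h15 : (2 * Q * r N) ^ e = Real.exp (Real.log (2 * Q * r N) * e) :=
        Real.rpow_def_of_pos (by positivity) e
      rw [h14, h15]
      apply Real.exp_le_exp.mpr
      have h16 : ((k₀:ℝ) - 1) ≤ Real.log (2 * Q * r N) / L := by
        rw [le_div_iff₀ hL]; exact hkb
      calc ((k₀:ℝ) - 1) * Real.log β' ≤ (Real.log (2 * Q * r N) / L) * Real.log β' :=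
            mul_le_mul_of_nonneg_right h16 hlogβ.le
        _ = Real.log (2 * Q * r N) * e := by rw [hedef]; ring
    have hun : (u n : ℝ) ≤ β' * (2 * Q * r N) ^ e * (u N : ℝ) := by
      have h17 : (u n : ℝ) ≤ β' ^ k₀ * (u N : ℝ) := hgeo_u k₀
      have h18 : β' ^ k₀ = β' * β' ^ (k₀ - 1) := by
        rw [← pow_succ']
        congr 1
        omega
      calc (u n : ℝ) ≤ β' ^ k₀ * (u N : ℝ) := h17
        _ = β' * β' ^ (k₀ - 1) * (u N : ℝ) := by rw [h18]
        _ ≤ β' * (2 * Q * r N) ^ e * (u N : ℝ) := by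
            apply mul_le_mul_of_nonneg_right _ (by linarith [hu1 N])
            exact mul_le_mul_of_nonneg_left hpowb hβ0.le
    have hfinal : 2 * Q * (u m : ℝ) ≤ C * Q ^ (1 + e) := by
      have h19 : (2 * Q * r N) ^ e = (2 * r N) ^ e * Q ^ e := by
        rw [show 2 * Q * r N = (2 * r N) * Q by ring,
          Real.mul_rpow (by positivity) hQ0.le]
      have h20 : Q ^ (1 + e) = Q * Q ^ e := by
        rw [Real.rpow_add hQ0, Real.rpow_one]
      have h21 : (u m : ℝ) ≤ β' * (β' * (2 * Q * r N) ^ e * (u N : ℝ)) :=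
        le_trans hum (mul_le_mul_of_nonneg_left hun hβ0.le)
      rw [hCdef, h20]
      rw [h19] at h21
      have hQe : 0 < Q ^ e := Real.rpow_pos_of_pos hQ0 e
      have h22 := mul_le_mul_of_nonneg_left h21 (show (0:ℝ) ≤ 2*Q by positivity)
      have hre : 2*Q*(β' * (β' * ((2*r N)^e * Q^e) * (u N:ℝ)))
          = 2*β'*β'*(u N:ℝ)*(2*r N)^e*(Q*Q^e) := by ring
      linarith
    -- conclude
    have h22 : 2 * Q * (u m : ℝ) ≤ Q ^ μ' := le_trans hfinal hq3
    have h23 : 0 < 2 * Q * (u m : ℝ) := mul_pos (mul_pos two_pos hQ0) hum0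
    calc 1 / Q ^ μ' ≤ 1 / (2 * Q * (u m : ℝ)) := by
          apply one_div_le_one_div_of_le h23 h22
      _ < |ξ - (p:ℝ)/Q| := h7
  -- now the eventually part
  have E1 : ∀ᶠ q : ℕ in atTop, 1 ≤ q := eventually_ge_atTop 1
  have E2 : ∀ᶠ q : ℕ in atTop, 1 / (2 * (q:ℝ)) < r N := by
    have h1 : Filter.Tendsto (fun q : ℕ => 1 / (2 * (q:ℝ))) atTop (𝓝 0) := by
      have h2 := tendsto_one_div_atTop_nhds_zero_nat.const_mul ((1:ℝ)/2)
      rw [mul_zero] at h2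
      exact h2.congr (fun q => by ring)
    exact h1.eventually_lt_const (hrpos N)
  have E3 : ∀ᶠ q : ℕ in atTop, C * (q:ℝ) ^ (1 + e) ≤ (q:ℝ) ^ μ' := by
    set δ : ℝ := μ' - (1 + e) with hδdef
    have hδ : 0 < δ := by rw [hδdef]; rw [hedef]; linarith
    have h1 : Filter.Tendsto (fun q : ℕ => ((q:ℝ)) ^ δ) atTop atTop :=
      (tendsto_rpow_atTop hδ).comp tendsto_natCast_atTop_atTop
    filter_upwards [h1.eventually_ge_atTop C, eventually_ge_atTop 1] with q hq hq1
    have hQ0 : (0:ℝ) < (q:ℝ) := by exact_mod_cast hq1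
    have h2 : (q:ℝ) ^ μ' = (q:ℝ) ^ (1 + e) * (q:ℝ) ^ δ := by
      rw [← Real.rpow_add hQ0]
      congr 1
      rw [hδdef]; ring
    rw [h2]
    have h3 : 0 < (q:ℝ) ^ (1 + e) := Real.rpow_pos_of_pos hQ0 _
    calc C * (q:ℝ) ^ (1 + e) = (q:ℝ) ^ (1 + e) * C := by ring
      _ ≤ (q:ℝ) ^ (1 + e) * (q:ℝ) ^ δ := mul_le_mul_of_nonneg_left hq h3.le
  filter_upwards [E1, E2, E3] with q h1 h2 h3
  exact hmain q h1 h2 h3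

theorem irrationality_exponent_le_of_ratio (ξ : ℝ) (hξ : Irrational ξ)
    (α β : ℝ) (hα0 : 0 < α) (hα1 : α < 1) (hβ : 1 < β)
    (u v : ℕ → ℤ)
    (hne : ∀ n, (u n : ℝ) * ξ - (v n : ℝ) ≠ 0) (hpos : ∀ n, 0 < u n)
    (hratio : limsup (fun n =>
        ((|(u (n + 1) : ℝ) * ξ - (v (n + 1) : ℝ)| / |(u n : ℝ) * ξ - (v n : ℝ)| : ℝ) : EReal))
        atTop ≤ (α : EReal))
    (hgrowth : limsup (fun n => (((u (n + 1) : ℝ) / (u n : ℝ) : ℝ) : EReal)) atTop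
        ≤ (β : EReal)) :
    irrationalityExponent ξ ≤ ((1 - Real.log β / Real.log α : ℝ) : EReal) := by
  set t : ℝ := 1 - Real.log β / Real.log α with htdef
  have hlogα : Real.log α < 0 := Real.log_neg hα0 hα1
  have hlogβ : 0 < Real.log β := Real.log_pos hβ
  set L : ℝ := -Real.log α with hLdef
  have hL : 0 < L := by simp only [hLdef]; linarith
  have ht : t = 1 + Real.log β / L := by
    rw [htdef, hLdef]
    rw [div_neg]
    ring
  clear_value t L
  have main : ∀ y : ℝ, t < y → irrationalityExponent ξ ≤ (y : EReal) := by
    intro y hy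
    set ε : ℝ := y - t with hεdef
    have hε : 0 < ε := by rw [hεdef]; linarith
    clear_value ε
    set B : ℝ := Real.log β + ε * L / 2 with hBdef
    set β' : ℝ := Real.exp B with hβ'def
    have hB : Real.log β < B := by rw [hBdef]; nlinarith [mul_pos hε hL]
    have hB0 : 0 < B := lt_trans hlogβ hB
    have hββ' : β < β' := by
      calc β = Real.exp (Real.log β) := (Real.exp_log (by linarith)).symm
        _ < Real.exp B := Real.exp_lt_exp.mpr hB
    have hβ'1 : 1 < β' := by
      calc (1:ℝ) = Real.exp 0 := Real.exp_zero.symm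
        _ < Real.exp B := Real.exp_lt_exp.mpr hB0
    have hlogβ' : Real.log β' = B := Real.log_exp B
    clear_value β'
    set D : ℝ := B * L / (Real.log β + ε * L) with hDdef
    have hden : 0 < Real.log β + ε * L := by nlinarith [mul_pos hε hL]
    have hD0 : 0 < D := by rw [hDdef]; exact div_pos (mul_pos hB0 hL) hden
    clear_value B
    have hDL : D < L := by
      rw [hDdef, div_lt_iff₀ hden]
      rw [hBdef]
      nlinarith [mul_pos hε (mul_pos hL hL)]
    clear_value D
    set L' : ℝ := (D + L) / 2 with hL'def
    have hDL' : D < L' := by rw [hL'def]; linarith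
    have hL'L : L' < L := by rw [hL'def]; linarith
    have hL'0 : 0 < L' := by rw [hL'def]; linarith
    set α' : ℝ := Real.exp (-L') with hα'def
    have hα'0 : 0 < α' := Real.exp_pos _
    have hα'1 : α' < 1 := by
      calc α' = Real.exp (-L') := hα'def
        _ < Real.exp 0 := Real.exp_lt_exp.mpr (by linarith)
        _ = 1 := Real.exp_zero
    have hαα' : α < α' := by
      calc α = Real.exp (Real.log α) := (Real.exp_log hα0).symm
        _ < Real.exp (-L') := Real.exp_lt_exp.mpr (by rw [hLdef] at hL'L; linarith)
        _ = α' := hα'def.symm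
    have hlogα' : Real.log α' = -L' := by rw [hα'def]; exact Real.log_exp _
    clear_value α'
    have hμ : 1 + Real.log β' / (-Real.log α') < y := by
      rw [hlogβ', hlogα', neg_neg]
      have h1 : B / L' < (Real.log β + ε * L) / L := by
        rw [div_lt_div_iff₀ hL'0 hL]
        have h2 : B * L < L' * (Real.log β + ε * L) := by
          rw [hDdef, div_lt_iff₀ hden] at hDL'
          linarith
        linarith
      have h3 : 1 + (Real.log β + ε * L) / L = t + ε := by
        rw [ht, add_div]
        have h4 : ε * L / L = ε := by field_simp
        rw [h4]
        ring
      have h5 : t + ε = y := by rw [hεdef]; ring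
      linarith
    -- eventual bounds from limsups
    have hr1 : ∀ᶠ n in atTop,
        |(u (n+1) : ℝ) * ξ - (v (n+1) : ℝ)| ≤ α' * |(u n : ℝ) * ξ - (v n : ℝ)| := by
      have h1 : limsup (fun n =>
          ((|(u (n + 1) : ℝ) * ξ - (v (n + 1) : ℝ)| / |(u n : ℝ) * ξ - (v n : ℝ)| : ℝ) : EReal))
          atTop < (α' : EReal) := lt_of_le_of_lt hratio (EReal.coe_lt_coe_iff.mpr hαα')
      filter_upwards [eventually_lt_of_limsup_lt h1] with n hn
      have h2 : |(u (n + 1) : ℝ) * ξ - (v (n + 1) : ℝ)| / |(u n : ℝ) * ξ - (v n : ℝ)| < α' :=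
        EReal.coe_lt_coe_iff.mp hn
      have h3 : 0 < |(u n : ℝ) * ξ - (v n : ℝ)| := abs_pos.mpr (hne n)
      rw [div_lt_iff₀ h3] at h2
      linarith
    have hu1 : ∀ᶠ n in atTop, ((u (n+1) : ℝ)) ≤ β' * (u n : ℝ) := by
      have h1 : limsup (fun n => (((u (n + 1) : ℝ) / (u n : ℝ) : ℝ) : EReal)) atTop
          < (β' : EReal) := lt_of_le_of_lt hgrowth (EReal.coe_lt_coe_iff.mpr hββ')
      filter_upwards [eventually_lt_of_limsup_lt h1] with n hn
      have h2 : (u (n + 1) : ℝ) / (u n : ℝ) < β' := EReal.coe_lt_coe_iff.mp hn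
      have h3 : (0:ℝ) < (u n : ℝ) := by exact_mod_cast hpos n
      rw [div_lt_iff₀ h3] at h2
      linarith
    obtain ⟨N, hN⟩ := eventually_atTop.mp (hr1.and hu1)
    have hev := key_lemma ξ hξ α' β' hα'0 hα'1 hβ'1 u v hne hpos N
      (fun n hn => (hN n hn).1) (fun n hn => (hN n hn).2) y hμ
    exact sInf_le ⟨y, rfl, hev⟩
  by_contra hcon
  push_neg at hcon
  obtain ⟨z, hz1, hz2⟩ := EReal.exists_between_coe_real hcon
  exact absurd (main z (EReal.coe_lt_coe_iff.mp hz1)) (not_le.mpr hz2)
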